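/- Suppose g and ĝ are concave real-valued functions on T = [A,B], g is in the Hölder class H^{β,L}(T) for some β ∈ [1,2], L > 0. Then there exists K = K(β,L) ∈ (0,1] such that for any ε > 0 and 0 < δ < K·min(B-A, ε^{1/β}): if sup_{t∈T}(ĝ - g)(t) ≥ ε or sup_{t∈[A+δ, B-δ]}(g - ĝ)(t) ≥ ε, then there exists c with [c, c+δ] ⊆ T such that inf_{t∈[c,c+δ]}(ĝ - g)(t) ≥ ε/4 or inf_{t∈[c,c+δ]}(g - ĝ)(t) ≥ ε/4. -/

import Mathlib

open Set

lemma sSup_extract {f : ℝ → ℝ} {a b ε η : ℝ} (hab : a ≤ b) (hη : 0 < η)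
    (h : ε ≤ sSup (f '' Set.Icc a b)) : ∃ t ∈ Set.Icc a b, ε - η < f t := by
  have hne : (f '' Set.Icc a b).Nonempty := ⟨f a, a, ⟨le_refl a, hab⟩, rfl⟩
  have hlt : ε - η < sSup (f '' Set.Icc a b) := lt_of_lt_of_le (by linarith) h
  rcases exists_lt_of_lt_csSup hne hlt with ⟨x, hx, hxlt⟩
  obtain ⟨t, ht, rfl⟩ := hx
  exact ⟨t, ht, hxlt⟩

lemma chord_bound (A B L β : ℝ) (hβ1 : 1 ≤ β) (hL : 0 < L)
    (g g' : ℝ → ℝ)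
    (hH1 : β = 1 → ∀ x ∈ Set.Icc A B, ∀ y ∈ Set.Icc A B, |g y - g x| ≤ L * |y - x|)
    (hH2 : 1 < β → (∀ x ∈ Set.Icc A B, HasDerivWithinAt g (g' x) (Set.Icc A B) x) ∧
      ∀ x ∈ Set.Icc A B, ∀ y ∈ Set.Icc A B, |g' y - g' x| ≤ L * |y - x| ^ (β - 1))
    {x y z : ℝ} (hx : x ∈ Set.Icc A B) (hz : z ∈ Set.Icc A B) (hxz : x < z)
    (hy : y ∈ Set.Icc x z) :
    (z - x) * g y ≤ (z - y) * g x + (y - x) * g z + (z - x) * (2 * L * (z - x) ^ β) := by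
  have hzx : (0:ℝ) < z - x := by linarith
  have hPβ : (0:ℝ) ≤ (z - x) ^ β := Real.rpow_nonneg hzx.le β
  have hEpos : (0:ℝ) ≤ (z - x) * (2 * L * (z - x) ^ β) := by positivity
  rcases eq_or_lt_of_le hy.1 with hxy | hxy
  · subst hxy; nlinarith
  rcases eq_or_lt_of_le hy.2 with hyz | hyz
  · subst hyz; nlinarith
  have hymem : y ∈ Set.Icc A B := ⟨le_trans hx.1 hy.1, le_trans hy.2 hz.2⟩
  rcases eq_or_lt_of_le hβ1 with hβe | hβg
  · have h1 := hH1 hβe.symm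
    have b1 := h1 x hx y hymem
    have b2 := h1 z hz y hymem
    rw [abs_le] at b1 b2
    rw [abs_of_pos (by linarith : (0:ℝ) < y - x)] at b1
    rw [abs_of_neg (by linarith : y - z < (0:ℝ))] at b2
    rw [← hβe, Real.rpow_one]
    nlinarith [b1.1, b1.2, b2.1, b2.2]
  · obtain ⟨hd, hh⟩ := hH2 hβg
    have hcont : ContinuousOn g (Set.Icc A B) := fun u hu => (hd u hu).continuousWithinAt
    have hsub : Set.Icc x z ⊆ Set.Icc A B := Set.Icc_subset_Icc hx.1 hz.2
    have hDA : ∀ u ∈ Set.Ioo x z, HasDerivAt g (g' u) u := by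
      intro u hu
      have huAB : u ∈ Set.Icc A B := hsub ⟨hu.1.le, hu.2.le⟩
      exact (hd u huAB).hasDerivAt (Icc_mem_nhds (lt_of_le_of_lt hx.1 hu.1)
        (lt_of_lt_of_le hu.2 hz.2))
    obtain ⟨ξ1, hξ1, hs1⟩ := exists_hasDerivAt_eq_slope g g' hxy
      (hcont.mono (Set.Icc_subset_Icc hx.1 hymem.2))
      (fun u hu => hDA u ⟨hu.1, lt_trans hu.2 hyz⟩)
    obtain ⟨ξ2, hξ2, hs2⟩ := exists_hasDerivAt_eq_slope g g' hyz
      (hcont.mono (Set.Icc_subset_Icc hymem.1 hz.2))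
      (fun u hu => hDA u ⟨lt_trans hxy hu.1, hu.2⟩)
    have hξ1AB : ξ1 ∈ Set.Icc A B := ⟨hx.1.trans hξ1.1.le, ((hξ1.2.trans hyz).le).trans hz.2⟩
    have hξ2AB : ξ2 ∈ Set.Icc A B := ⟨hx.1.trans (hxy.trans hξ2.1).le, hξ2.2.le.trans hz.2⟩
    have hg1 : g y - g x = g' ξ1 * (y - x) := by
      rw [hs1, div_mul_cancel₀ _ (sub_ne_zero.mpr hxy.ne')]
    have hg2 : g z - g y = g' ξ2 * (z - y) := by
      rw [hs2, div_mul_cancel₀ _ (sub_ne_zero.mpr hyz.ne')]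
    have hdiff := hh ξ2 hξ2AB ξ1 hξ1AB
    have habs : |ξ1 - ξ2| ≤ z - x := by
      rw [abs_le]; constructor <;> nlinarith [hξ1.1, hξ1.2, hξ2.1, hξ2.2]
    have hmono : |ξ1 - ξ2| ^ (β - 1) ≤ (z - x) ^ (β - 1) :=
      Real.rpow_le_rpow (abs_nonneg _) habs (by linarith)
    have hdd : g' ξ1 - g' ξ2 ≤ L * (z - x) ^ (β - 1) := by
      have hL' : L * |ξ1 - ξ2| ^ (β - 1) ≤ L * (z - x) ^ (β - 1) :=
        mul_le_mul_of_nonneg_left hmono hL.le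
      calc g' ξ1 - g' ξ2 ≤ |g' ξ1 - g' ξ2| := le_abs_self _
        _ ≤ L * |ξ1 - ξ2| ^ (β - 1) := hdiff
        _ ≤ _ := hL'
    have hrw : (z - x) ^ β = (z - x) ^ (β - 1) * (z - x) := by
      rw [← Real.rpow_add_one hzx.ne' (β - 1)]; congr 1; ring
    rw [hrw]
    have hP1 : (0:ℝ) ≤ (z - x) ^ (β - 1) := Real.rpow_nonneg hzx.le _
    set P := (z - x) ^ (β - 1) with hPdef
    have key : (z - x) * g y - (z - y) * g x - (y - x) * g z
        = (z - y) * (y - x) * (g' ξ1 - g' ξ2) := by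
      linear_combination (z - y) * hg1 - (y - x) * hg2
    have b1 : (z - y) * (y - x) * (g' ξ1 - g' ξ2) ≤ (z - y) * (y - x) * (L * P) :=
      mul_le_mul_of_nonneg_left hdd
        (mul_nonneg (by linarith : (0:ℝ) ≤ z - y) (by linarith : (0:ℝ) ≤ y - x))
    have harea : (z - y) * (y - x) ≤ (z - x) * (z - x) := by nlinarith
    have b2 := mul_le_mul_of_nonneg_right harea (mul_nonneg hL.le hP1)
    nlinarith [key, b1, b2, mul_nonneg (mul_nonneg hzx.le hzx.le) (mul_nonneg hL.le hP1)]

lemma combine_ineq {p q ε E gt0 gt1 gt gh0 gh1 ght : ℝ} (hp : 0 < p) (hpq : 2*p ≤ q)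
    (hconc : (q - p) * gh0 + p * ght ≤ q * gh1)
    (hchord : q * gt1 ≤ (q - p) * gt0 + p * gt + q * E)
    (h0 : 15*ε/16 ≤ gh0 - gt0) (h1 : gh1 - gt1 < ε/4) (hE : E ≤ 3*ε/32) (hε : 0 < ε) :
    ε/4 ≤ gt - ght := by
  have hq0 : 0 < q := by linarith
  have c1 : q*(gh1-gt1) < q*(ε/4) := by
    exact mul_lt_mul_of_pos_left h1 hq0
  have c2 : (q-p)*(15*ε/16) ≤ (q-p)*(gh0-gt0) := mul_le_mul_of_nonneg_left h0 (by linarith)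
  have c3 : q*E ≤ q*(3*ε/32) := mul_le_mul_of_nonneg_left hE hq0.le
  have c5 : 0 ≤ (q-2*p)*ε := mul_nonneg (by linarith) hε.le
  nlinarith [c1, c2, c3, c5, hconc, hchord, mul_pos hp hε]

set_option maxHeartbeats 1000000 in
/-- Lemma A.3 of Dümbgen–Rufibach (2009): if two concave functions differ by at
least `ε` somewhere (in the appropriate one-sided sense), and one of them lies
in the Hölder class `H^{β,L}`, then they differ by at least `ε/4` uniformly on
some subinterval of length `δ`. -/
theorem stmt14 (β L : ℝ) (hβ : β ∈ Set.Icc 1 2) (hL : 0 < L) :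
    ∃ K : ℝ, K ∈ Set.Ioc 0 1 ∧
      ∀ A B : ℝ, A < B → ∀ g ghat g' : ℝ → ℝ,
        ConcaveOn ℝ (Set.Icc A B) g → ConcaveOn ℝ (Set.Icc A B) ghat →
        (β = 1 → ∀ x ∈ Set.Icc A B, ∀ y ∈ Set.Icc A B,
          |g y - g x| ≤ L * |y - x|) →
        (1 < β → (∀ x ∈ Set.Icc A B, HasDerivWithinAt g (g' x) (Set.Icc A B) x) ∧
          ∀ x ∈ Set.Icc A B, ∀ y ∈ Set.Icc A B,
            |g' y - g' x| ≤ L * |y - x| ^ (β - 1)) →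
        ∀ ε : ℝ, 0 < ε → ∀ δ : ℝ, 0 < δ → δ < K * min (B - A) (ε ^ (1/β)) →
        (ε ≤ sSup ((fun t => ghat t - g t) '' Set.Icc A B) ∨
          ε ≤ sSup ((fun t => g t - ghat t) '' Set.Icc (A + δ) (B - δ))) →
        ∃ c : ℝ, A ≤ c ∧ c + δ ≤ B ∧
          ((∀ t ∈ Set.Icc c (c + δ), ε / 4 ≤ ghat t - g t) ∨
            (∀ t ∈ Set.Icc c (c + δ), ε / 4 ≤ g t - ghat t)) := by
  obtain ⟨hβ1, hβ2⟩ := hβ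
  have hβ0 : (0:ℝ) < β := by linarith
  refine ⟨min (1/8 : ℝ) (1/(192*L)), ⟨lt_min (by norm_num) (by positivity),
    le_trans (min_le_left _ _) (by norm_num)⟩, ?_⟩
  set K := min (1/8 : ℝ) (1/(192*L)) with hKdef
  have hK0 : 0 < K := lt_min (by norm_num) (by positivity)
  have hK1 : K ≤ 1 := le_trans (min_le_left _ _) (by norm_num)
  have hKa : K ≤ 1/8 := min_le_left _ _
  have hKb : K ≤ 1/(192*L) := min_le_right _ _
  intro A B hAB g ghat g' hg hghat hH1 hH2 ε hε δ hδ hδK hsup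
  -- basic bounds on δ
  have hεr : 0 < ε ^ (1/β) := Real.rpow_pos_of_pos hε _
  have hδBA : δ < (B - A)/8 := by
    have h1 : K * min (B - A) (ε ^ (1/β)) ≤ K * (B - A) :=
      mul_le_mul_of_nonneg_left (min_le_left _ _) hK0.le
    have h2 : K * (B - A) ≤ (1/8) * (B - A) :=
      mul_le_mul_of_nonneg_right hKa (by linarith)
    linarith
  have hδε : δ < K * ε ^ (1/β) := by
    have h1 : K * min (B - A) (ε ^ (1/β)) ≤ K * (ε ^ (1/β)) :=
      mul_le_mul_of_nonneg_left (min_le_right _ _) hK0.le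
    linarith
  have hδβKL : δ ^ β ≤ ε / (192*L) := by
    have h1 : δ ^ β ≤ (K * ε ^ (1/β)) ^ β :=
      Real.rpow_le_rpow hδ.le hδε.le hβ0.le
    have h2 : (K * ε ^ (1/β)) ^ β = K ^ β * ε := by
      rw [Real.mul_rpow hK0.le (Real.rpow_nonneg hε.le _), ← Real.rpow_mul hε.le,
        one_div, inv_mul_cancel₀ hβ0.ne', Real.rpow_one]
    have h3 : K ^ β ≤ K := by
      calc K ^ β ≤ K ^ (1:ℝ) := Real.rpow_le_rpow_of_exponent_ge hK0 hK1 hβ1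
        _ = K := Real.rpow_one K
    have h4 : K ^ β * ε ≤ K * ε := mul_le_mul_of_nonneg_right h3 hε.le
    have h5 : K * ε ≤ 1/(192*L) * ε := mul_le_mul_of_nonneg_right hKb hε.le
    have h6 : 1/(192*L) * ε = ε / (192*L) := by ring
    linarith
  have hEb : ∀ q : ℝ, 0 ≤ q → q ≤ 3*δ → 2*L*q^β ≤ 3*ε/32 := by
    intro q hq0 hq3
    have h1 : q^β ≤ (3*δ)^β := Real.rpow_le_rpow hq0 hq3 hβ0.le
    have h2 : (3*δ)^β = 3^β * δ^β := Real.mul_rpow (by norm_num) hδ.le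
    have h3 : (3:ℝ)^β ≤ 9 := by
      calc (3:ℝ)^β ≤ 3^(2:ℝ) := Real.rpow_le_rpow_of_exponent_le (by norm_num) hβ2
        _ = 9 := by
          rw [show (2:ℝ) = ((2:ℕ):ℝ) by norm_num, Real.rpow_natCast]; norm_num
    have hδβ0 : 0 ≤ δ^β := Real.rpow_nonneg hδ.le β
    have h4 : q^β ≤ 9 * δ^β := by
      calc q^β ≤ 3^β * δ^β := h2 ▸ h1
        _ ≤ 9 * δ^β := mul_le_mul_of_nonneg_right h3 hδβ0
    have h5 : L * (δ^β) ≤ ε/192 := by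
      have h5a := mul_le_mul_of_nonneg_left hδβKL hL.le
      have heq : L * (ε/(192*L)) = ε/192 := by field_simp
      linarith
    nlinarith [mul_le_mul_of_nonneg_left h4 hL.le]
  rcases hsup with hs | hs
  · -- Case 1 : sup of ghat - g over [A,B] is ≥ ε
    obtain ⟨t0, ht0, ht0v⟩ := sSup_extract (le_of_lt hAB) (by positivity : (0:ℝ) < ε/16) hs
    have ht0v' : 15*ε/16 ≤ ghat t0 - g t0 := by linarith
    by_cases hside : t0 ≤ (A+B)/2
    · -- room to the right
      have hroom : t0 + 3*δ ≤ B := by linarith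
      by_cases hdone : ∀ t ∈ Set.Icc t0 (t0+δ), ε/4 ≤ ghat t - g t
      · exact ⟨t0, ht0.1, by linarith, Or.inl hdone⟩
      · push_neg at hdone
        obtain ⟨t1, ht1mem, ht1v⟩ := hdone
        have ht1ne : t0 < t1 := by
          rcases eq_or_lt_of_le ht1mem.1 with h | h
          · exfalso; rw [← h] at ht1v; linarith
          · exact h
        refine ⟨t0 + 2*δ, by linarith [ht0.1], by linarith, Or.inr ?_⟩
        intro t htmem
        have htq1 : t0 + 2*δ ≤ t := htmem.1
        have htq2 : t ≤ t0 + 3*δ := by have := htmem.2; linarith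
        have htAB : t ∈ Set.Icc A B := ⟨by linarith [ht0.1], by linarith⟩
        have hq0 : (0:ℝ) < t - t0 := by linarith
        have hp0 : (0:ℝ) < t1 - t0 := by linarith
        have hpδ : t1 - t0 ≤ δ := by have := ht1mem.2; linarith
        -- concavity of ghat
        have ha : 0 ≤ (t - t1)/(t - t0) := div_nonneg (by linarith) hq0.le
        have hb : 0 ≤ (t1 - t0)/(t - t0) := div_nonneg (by linarith) hq0.le
        have hab : (t - t1)/(t - t0) + (t1 - t0)/(t - t0) = 1 := by
          rw [← add_div, div_eq_one_iff_eq hq0.ne']; ring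
        have hco := hghat.2 ht0 htAB ha hb hab
        simp only [smul_eq_mul] at hco
        have hpt : (t - t1)/(t - t0) * t0 + (t1 - t0)/(t - t0) * t = t1 := by
          rw [div_mul_eq_mul_div, div_mul_eq_mul_div, ← add_div,
            div_eq_iff hq0.ne']; ring
        rw [hpt] at hco
        rw [div_mul_eq_mul_div, div_mul_eq_mul_div, ← add_div,
          div_le_iff₀ hq0] at hco
        have hconc : ((t - t0) - (t1 - t0)) * ghat t0 + (t1 - t0) * ghat t
            ≤ (t - t0) * ghat t1 := by linarith
        -- chord bound
        have hch := chord_bound A B L β hβ1 hL g g' hH1 hH2 ht0 htAB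
          (by linarith : t0 < t) ⟨ht1mem.1, by linarith⟩
        have hchord : (t - t0) * g t1 ≤ ((t - t0) - (t1 - t0)) * g t0
            + (t1 - t0) * g t + (t - t0) * (2 * L * (t - t0) ^ β) := by linarith
        exact combine_ineq hp0 (by linarith) hconc hchord ht0v' ht1v
          (hEb (t - t0) hq0.le (by linarith)) hε
    · -- room to the left
      push_neg at hside
      have hroom : A ≤ t0 - 3*δ := by linarith
      by_cases hdone : ∀ t ∈ Set.Icc (t0-δ) (t0-δ+δ), ε/4 ≤ ghat t - g t
      · exact ⟨t0 - δ, by linarith, by linarith [ht0.2], Or.inl hdone⟩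
      · push_neg at hdone
        obtain ⟨t1, ht1mem, ht1v⟩ := hdone
        have ht1le : t1 ≤ t0 := by have := ht1mem.2; linarith
        have ht1ne : t1 < t0 := by
          rcases eq_or_lt_of_le ht1le with h | h
          · exfalso; rw [h] at ht1v; linarith
          · exact h
        refine ⟨t0 - 3*δ, by linarith, by linarith [ht0.2], Or.inr ?_⟩
        intro t htmem
        have htq1 : t0 - 3*δ ≤ t := htmem.1
        have htq2 : t ≤ t0 - 2*δ := by have := htmem.2; linarith
        have htAB : t ∈ Set.Icc A B := ⟨by linarith, by linarith [ht0.2]⟩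
        have hq0 : (0:ℝ) < t0 - t := by linarith
        have hp0 : (0:ℝ) < t0 - t1 := by linarith
        have hpδ : t0 - t1 ≤ δ := by have := ht1mem.1; linarith
        have ha : 0 ≤ (t1 - t)/(t0 - t) := div_nonneg (by linarith) hq0.le
        have hb : 0 ≤ (t0 - t1)/(t0 - t) := div_nonneg (by linarith) hq0.le
        have hab : (t1 - t)/(t0 - t) + (t0 - t1)/(t0 - t) = 1 := by
          rw [← add_div, div_eq_one_iff_eq hq0.ne']; ring
        have hco := hghat.2 ht0 htAB ha hb hab
        simp only [smul_eq_mul] at hco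
        have hpt : (t1 - t)/(t0 - t) * t0 + (t0 - t1)/(t0 - t) * t = t1 := by
          rw [div_mul_eq_mul_div, div_mul_eq_mul_div, ← add_div,
            div_eq_iff hq0.ne']; ring
        rw [hpt] at hco
        rw [div_mul_eq_mul_div, div_mul_eq_mul_div, ← add_div,
          div_le_iff₀ hq0] at hco
        have hconc : ((t0 - t) - (t0 - t1)) * ghat t0 + (t0 - t1) * ghat t
            ≤ (t0 - t) * ghat t1 := by linarith
        have hch := chord_bound A B L β hβ1 hL g g' hH1 hH2 htAB ht0
          (by linarith : t < t0) ⟨by linarith, ht1le⟩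
        have hchord : (t0 - t) * g t1 ≤ ((t0 - t) - (t0 - t1)) * g t0
            + (t0 - t1) * g t + (t0 - t) * (2 * L * (t0 - t) ^ β) := by linarith
        exact combine_ineq hp0 (by linarith) hconc hchord ht0v' ht1v
          (hEb (t0 - t) hq0.le (by linarith)) hε
  · -- Case 2 : sup of g - ghat over [A+δ, B-δ] is ≥ ε
    have hApBm : A + δ ≤ B - δ := by linarith
    obtain ⟨t0, ht0, ht0v⟩ := sSup_extract hApBm (by positivity : (0:ℝ) < ε/16) hs
    have ht0v' : 15*ε/16 ≤ g t0 - ghat t0 := by linarith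
    have ht0AB : t0 ∈ Set.Icc A B := ⟨by linarith [ht0.1], by linarith [ht0.2]⟩
    by_cases hd1 : ∀ t ∈ Set.Icc (t0-δ) (t0-δ+δ), ε/4 ≤ g t - ghat t
    · exact ⟨t0 - δ, by linarith [ht0.1], by linarith [ht0.2], Or.inr hd1⟩
    by_cases hd2 : ∀ t ∈ Set.Icc t0 (t0+δ), ε/4 ≤ g t - ghat t
    · exact ⟨t0, by linarith [ht0.1], by linarith [ht0.2], Or.inr hd2⟩
    exfalso
    push_neg at hd1 hd2
    obtain ⟨t1, ht1mem, ht1v⟩ := hd1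
    obtain ⟨t2, ht2mem, ht2v⟩ := hd2
    have ht1le : t1 ≤ t0 := by have := ht1mem.2; linarith
    have ht1lt : t1 < t0 := by
      rcases eq_or_lt_of_le ht1le with h | h
      · exfalso; rw [h] at ht1v; linarith
      · exact h
    have ht2lt : t0 < t2 := by
      rcases eq_or_lt_of_le ht2mem.1 with h | h
      · exfalso; rw [← h] at ht2v; linarith
      · exact h
    have ht1AB : t1 ∈ Set.Icc A B := ⟨by linarith [ht1mem.1, ht0.1], by linarith [ht0.2]⟩
    have ht2AB : t2 ∈ Set.Icc A B := ⟨by linarith [ht0.1], by linarith [ht2mem.2, ht0.2]⟩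
    have hq0 : (0:ℝ) < t2 - t1 := by linarith
    -- concavity of ghat at t0 between t1 and t2
    have ha : 0 ≤ (t2 - t0)/(t2 - t1) := div_nonneg (by linarith) hq0.le
    have hb : 0 ≤ (t0 - t1)/(t2 - t1) := div_nonneg (by linarith) hq0.le
    have hab : (t2 - t0)/(t2 - t1) + (t0 - t1)/(t2 - t1) = 1 := by
      rw [← add_div, div_eq_one_iff_eq hq0.ne']; ring
    have hco := hghat.2 ht1AB ht2AB ha hb hab
    simp only [smul_eq_mul] at hco
    have hpt : (t2 - t0)/(t2 - t1) * t1 + (t0 - t1)/(t2 - t1) * t2 = t0 := by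
      rw [div_mul_eq_mul_div, div_mul_eq_mul_div, ← add_div,
        div_eq_iff hq0.ne']; ring
    rw [hpt] at hco
    rw [div_mul_eq_mul_div, div_mul_eq_mul_div, ← add_div,
      div_le_iff₀ hq0] at hco
    have hconc : (t2 - t0) * ghat t1 + (t0 - t1) * ghat t2 ≤ (t2 - t1) * ghat t0 := by
      linarith
    have hch := chord_bound A B L β hβ1 hL g g' hH1 hH2 ht1AB ht2AB
      (by linarith : t1 < t2) ⟨ht1le, ht2mem.1⟩
    have hE := hEb (t2 - t1) hq0.le
      (by have := ht1mem.1; have := ht2mem.2; linarith)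
    have c1 : (t2-t0)*(g t1 - ghat t1) < (t2-t0)*(ε/4) :=
      mul_lt_mul_of_pos_left ht1v (by linarith)
    have c2 : (t0-t1)*(g t2 - ghat t2) < (t0-t1)*(ε/4) :=
      mul_lt_mul_of_pos_left ht2v (by linarith)
    have c3 : (t2-t1)*(15*ε/16) ≤ (t2-t1)*(g t0 - ghat t0) :=
      mul_le_mul_of_nonneg_left ht0v' hq0.le
    have c4 : (t2-t1)*(2*L*(t2-t1)^β) ≤ (t2-t1)*(3*ε/32) :=
      mul_le_mul_of_nonneg_left hE hq0.le
    have c5 : 0 < (t2-t1)*ε := mul_pos hq0 hε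
    nlinarith [hch, hconc, c1, c2, c3, c4, c5]
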